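/- There exists an R-bilinear map B : Ω[A⁄R] × Ω[A⁄R] → Ω[A⁄R] satisfying B(a • D u, b • D v) = a{u, b} • D v + b{a, v} • D u + (ab) • D{u, v} for all a, b, u, v ∈ A. -/

import Mathlib

open Finsupp KaehlerDifferential

section LieDer

variable (R A : Type*) [CommRing R] [CommRing A] [Algebra R A]

variable {R A} in
/-- The "Lie derivative along a derivation" on the Finsupp presentation. -/
noncomputable def lmapAux (X : Derivation R A A) : (A →₀ A) →ₗ[R] KaehlerDifferential R A :=
  Finsupp.lsum R fun b =>
    { toFun := fun a => X a • KaehlerDifferential.D R A b + a • KaehlerDifferential.D R A (X b)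
      map_add' := fun a a' => by simp [add_smul]; abel
      map_smul' := fun r a => by match_scalars <;> simp [Derivation.map_smul, Algebra.smul_def] }

variable {R A}

@[simp] theorem lmapAux_single (X : Derivation R A A) (b a : A) :
    lmapAux X (Finsupp.single b a)
      = X a • KaehlerDifferential.D R A b + a • KaehlerDifferential.D R A (X b) := by
  simp [lmapAux]

theorem lmapAux_smul' (X : Derivation R A A) (c : A) (y : A →₀ A) :
    lmapAux X (c • y) = c • lmapAux X y
      + X c • Finsupp.linearCombination A (KaehlerDifferential.D R A) y := by
  induction y using Finsupp.induction_linear with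
  | zero => simp
  | add f g hf hg => rw [smul_add, map_add, hf, hg]; simp [smul_add]; abel
  | single b a =>
      rw [Finsupp.smul_single, lmapAux_single, smul_eq_mul, linearCombination_single,
        lmapAux_single, X.leibniz]
      simp only [smul_eq_mul]
      module

theorem lmapAux_ker (X : Derivation R A A) :
    (KaehlerDifferential.kerTotal R A).restrictScalars R ≤ LinearMap.ker (lmapAux X) := by
  intro y hy
  have hy' : y ∈ KaehlerDifferential.kerTotal R A := hy
  clear hy
  rw [LinearMap.mem_ker]
  suffices h : lmapAux X y = 0
      ∧ Finsupp.linearCombination A (KaehlerDifferential.D R A) y = 0 from h.1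
  rw [KaehlerDifferential.kerTotal] at hy'
  induction hy' using Submodule.span_induction with
  | mem x h =>
      obtain (⟨⟨u, v⟩, rfl⟩ | ⟨⟨u, v⟩, rfl⟩) | ⟨r, rfl⟩ := h
      · constructor <;>
        · simp only [map_add, map_sub, lmapAux_single, linearCombination_single, map_add,
            Derivation.map_one_eq_zero, zero_smul, one_smul]
          abel
      · constructor
        · simp only [map_add, map_sub, lmapAux_single, linearCombination_single,
            Derivation.leibniz, Derivation.map_one_eq_zero, zero_smul, one_smul, smul_eq_mul,
            map_add, zero_add]
          module
        · simp only [map_add, map_sub, linearCombination_single, one_smul, Derivation.leibniz]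
          abel
      · constructor <;> simp
  | zero => simp
  | add x y hx hy ihx ihy => exact ⟨by rw [map_add, ihx.1, ihy.1, add_zero],
      by rw [map_add, ihx.2, ihy.2, add_zero]⟩
  | smul c x hx ih =>
      refine ⟨?_, by rw [map_smul, ih.2, smul_zero]⟩
      rw [lmapAux_smul', ih.1, ih.2, smul_zero, smul_zero, add_zero]

/-- Lie derivative along a derivation, on Kähler differentials. -/
noncomputable def lieDer (X : Derivation R A A) :
    KaehlerDifferential R A →ₗ[R] KaehlerDifferential R A :=
  (Submodule.liftQ ((KaehlerDifferential.kerTotal R A).restrictScalars R) (lmapAux X)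
      (lmapAux_ker X)) ∘ₗ
    (Submodule.Quotient.restrictScalarsEquiv R (KaehlerDifferential.kerTotal R A)).symm.toLinearMap
      ∘ₗ ((KaehlerDifferential.quotKerTotalEquiv R A).symm.restrictScalars R).toLinearMap

theorem lieDer_total (X : Derivation R A A) (y : A →₀ A) :
    lieDer X (Finsupp.linearCombination A (KaehlerDifferential.D R A) y) = lmapAux X y := by
  have h1 : (KaehlerDifferential.quotKerTotalEquiv R A) (Submodule.Quotient.mk y)
      = Finsupp.linearCombination A (KaehlerDifferential.D R A) y := rfl
  rw [← h1]
  simp only [lieDer, LinearMap.coe_comp, Function.comp_apply, LinearEquiv.coe_coe,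
    LinearEquiv.restrictScalars_apply, LinearEquiv.symm_apply_apply,
    Submodule.Quotient.restrictScalarsEquiv_symm_mk, Submodule.liftQ_apply]

theorem lieDer_smulD (X : Derivation R A A) (a b : A) :
    lieDer X (a • KaehlerDifferential.D R A b)
      = X a • KaehlerDifferential.D R A b + a • KaehlerDifferential.D R A (X b) := by
  simpa using lieDer_total X (Finsupp.single b a)

theorem lieDer_add_apply (X Y : Derivation R A A) (w : KaehlerDifferential R A) :
    lieDer (X + Y) w = lieDer X w + lieDer Y w := by
  obtain ⟨y, rfl⟩ := KaehlerDifferential.linearCombination_surjective R A w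
  simp only [lieDer_total]
  induction y using Finsupp.induction_linear with
  | zero => simp
  | add f g hf hg => simp only [map_add, hf, hg]; abel
  | single b a =>
      simp only [lmapAux_single, Derivation.add_apply, add_smul, map_add, smul_add]
      abel

theorem lieDer_smul_apply (r : R) (X : Derivation R A A) (w : KaehlerDifferential R A) :
    lieDer (r • X) w = r • lieDer X w := by
  obtain ⟨y, rfl⟩ := KaehlerDifferential.linearCombination_surjective R A w
  simp only [lieDer_total]
  induction y using Finsupp.induction_linear with
  | zero => simp
  | add f g hf hg => rw [map_add, map_add, hf, hg]; module
  | single b a =>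
      simp only [lmapAux_single, Derivation.smul_apply, Derivation.map_smul]
      match_scalars <;> simp [Algebra.smul_def] <;> ring

end LieDer



section Poisson

variable {R A : Type*} [CommRing R] [CommRing A] [Algebra R A]

/-- For fixed `u`, `P u ·` is a derivation. -/
def puDer (P : A → A → A)
    (hP_add_right : ∀ u v w : A, P u (v + w) = P u v + P u w)
    (hP_smul_right : ∀ (r : R) (u v : A), P u (r • v) = r • P u v)
    (hP_leibniz : ∀ u a b : A, P u (a * b) = P u a * b + a * P u b) (u : A) :
    Derivation R A A where
  toFun := P u
  map_add' := hP_add_right u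
  map_smul' := fun r v => by simpa using hP_smul_right r u v
  map_one_eq_zero' := by
    have h := hP_leibniz u 1 1
    rw [mul_one, one_mul, mul_one] at h
    show P u 1 = 0
    linear_combination -h
  leibniz' := fun a b => by
    show P u (a * b) = a • P u b + b • P u a
    rw [smul_eq_mul, smul_eq_mul]
    linear_combination hP_leibniz u a b

@[simp] theorem puDer_apply (P : A → A → A) (h1 h2 h3) (u b : A) :
    puDer (R := R) P h1 h2 h3 u b = P u b := rfl

/-- `u ↦ P u ·` as a derivation valued in derivations. -/
def pDer (P : A → A → A)
    (hP_add_left : ∀ u v w : A, P (u + v) w = P u w + P v w)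
    (hP_smul_left : ∀ (r : R) (u v : A), P (r • u) v = r • P u v)
    (hP_add_right : ∀ u v w : A, P u (v + w) = P u v + P u w)
    (hP_smul_right : ∀ (r : R) (u v : A), P u (r • v) = r • P u v)
    (hP_antisymm : ∀ u v : A, P u v = - P v u)
    (hP_leibniz : ∀ u a b : A, P u (a * b) = P u a * b + a * P u b) :
    Derivation R A (Derivation R A A) where
  toFun := puDer P hP_add_right hP_smul_right hP_leibniz
  map_add' := fun u v => by ext b; simp [hP_add_left]
  map_smul' := fun r u => by ext b; simp [hP_smul_left]
  map_one_eq_zero' := by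
    ext b
    have h3 : P b 1 = 0 := by
      have h := hP_leibniz b 1 1
      rw [mul_one, one_mul, mul_one] at h
      linear_combination -h
    simp only [Derivation.coe_zero, Pi.zero_apply]
    show P 1 b = 0
    rw [hP_antisymm 1 b, h3, neg_zero]
  leibniz' := fun u w => by
    ext b
    show P (u * w) b = (u • puDer P hP_add_right hP_smul_right hP_leibniz w
      + w • puDer P hP_add_right hP_smul_right hP_leibniz u) b
    simp only [Derivation.add_apply, Derivation.smul_apply, puDer_apply, smul_eq_mul]
    linear_combination hP_antisymm (u * w) b - hP_leibniz b u w - w * hP_antisymm b u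
      - u * hP_antisymm b w

@[simp] theorem pDer_apply (P : A → A → A) (h1 h2 h3 h4 h5 h6) (u b : A) :
    pDer (R := R) P h1 h2 h3 h4 h5 h6 u b = P u b := rfl

end Poisson

/-- There exists an `R`-bilinear map
`B : Ω[A⁄R] × Ω[A⁄R] → Ω[A⁄R]` satisfying
`B(a • D u, b • D v) = a{u,b} • D v + b{a,v} • D u + (ab) • D{u,v}`. -/
theorem exists_koszul_bracket
    (R A : Type*) [CommRing R] [CommRing A] [Algebra R A]
    (P : A → A → A)
    (hP_add_left : ∀ u v w : A, P (u + v) w = P u w + P v w)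
    (hP_smul_left : ∀ (r : R) (u v : A), P (r • u) v = r • P u v)
    (hP_add_right : ∀ u v w : A, P u (v + w) = P u v + P u w)
    (hP_smul_right : ∀ (r : R) (u v : A), P u (r • v) = r • P u v)
    (hP_antisymm : ∀ u v : A, P u v = - P v u)
    (hP_jacobi : ∀ u v w : A, P u (P v w) + P v (P w u) + P w (P u v) = 0)
    (hP_leibniz : ∀ u a b : A, P u (a * b) = P u a * b + a * P u b) :
    ∃ B : KaehlerDifferential R A →ₗ[R] KaehlerDifferential R A →ₗ[R] KaehlerDifferential R A,
      ∀ a b u v : A,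
        B (a • KaehlerDifferential.D R A u) (b • KaehlerDifferential.D R A v) =
          (a * P u b) • KaehlerDifferential.D R A v +
          (b * P a v) • KaehlerDifferential.D R A u +
          (a * b) • KaehlerDifferential.D R A (P u v) := by
  classical
  set δ : Derivation R A (Derivation R A A) :=
    pDer P hP_add_left hP_smul_left hP_add_right hP_smul_right hP_antisymm hP_leibniz with hδ
  set H : KaehlerDifferential R A →ₗ[A] Derivation R A A := δ.liftKaehlerDifferential with hH
  set ι : Derivation R A A →ₗ[A] (KaehlerDifferential R A →ₗ[A] A) :=
    (KaehlerDifferential.linearMapEquivDerivation R A).symm.toLinearMap with hι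
  have hι_apply : ∀ (X : Derivation R A A) (w), ι X w = X.liftKaehlerDifferential w :=
    fun X w => rfl
  set f : KaehlerDifferential R A → KaehlerDifferential R A → KaehlerDifferential R A :=
    fun α β => lieDer (H α) β - lieDer (H β) α - KaehlerDifferential.D R A (ι (H α) β) with hf
  have hHsD : ∀ a u : A, H (a • KaehlerDifferential.D R A u) = a • δ u := by
    intro a u
    rw [map_smul, Derivation.liftKaehlerDifferential_comp_D]
  have key : ∀ a b u v : A,
      f (a • KaehlerDifferential.D R A u) (b • KaehlerDifferential.D R A v) =
        (a * P u b) • KaehlerDifferential.D R A v +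
        (b * P a v) • KaehlerDifferential.D R A u +
        (a * b) • KaehlerDifferential.D R A (P u v) := by
    intro a b u v
    have hι2 : ι (a • δ u) (b • KaehlerDifferential.D R A v) = b * (a * P u v) := by
      rw [hι_apply, map_smul, Derivation.liftKaehlerDifferential_comp_D]
      simp [hδ, smul_eq_mul]
    rw [hf]
    dsimp only
    rw [hHsD, hHsD, lieDer_smulD, lieDer_smulD, hι2]
    simp only [hδ, Derivation.smul_apply, pDer_apply, smul_eq_mul]
    rw [hP_antisymm v a, hP_antisymm v u]
    simp only [map_mul, map_neg, Derivation.leibniz, smul_eq_mul, mul_neg, neg_mul, smul_neg,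
      smul_add, smul_smul, neg_smul]
    match_scalars <;> ring
  refine ⟨LinearMap.mk₂ R f ?_ ?_ ?_ ?_, key⟩
  · intro α α' β
    simp only [hf, map_add, lieDer_add_apply, LinearMap.add_apply]
    abel
  · intro r α β
    simp only [hf, LinearMap.map_smul_of_tower, map_smul, lieDer_smul_apply,
      LinearMap.smul_apply, Derivation.map_smul, smul_sub]
  · intro α β β'
    simp only [hf, map_add, lieDer_add_apply, LinearMap.add_apply]
    abel
  · intro r α β
    simp only [hf, LinearMap.map_smul_of_tower, map_smul, lieDer_smul_apply,
      LinearMap.smul_apply, Derivation.map_smul, smul_sub]
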